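/- If s1, s2, s3, s4 are short edges of K6 such that s1 crosses s2, s2 crosses s3, s3 crosses s4, s1 ≠ s3, and s2 ≠ s4, then s1 and s4 cross the same long edge. (Hence a subsequence long–short–short–short–short–long cannot appear in a chain of consecutively crossing edges.) -/

import Mathlib

/-- The cyclic length of the chord joining vertices `a` and `b` of `K₆`,
whose vertices are labeled by `ZMod 6` in cyclic order around a circle. -/
def cycLen (a b : ZMod 6) : ℕ := min (b - a).val (a - b).val

/-- An interior edge of `K₆`: a 2-element set of vertices at cyclic distance at least 2. -/
def InteriorEdge (e : Finset (ZMod 6)) : Prop :=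
  e.card = 2 ∧ ∀ a ∈ e, ∀ b ∈ e, a ≠ b → 2 ≤ cycLen a b

/-- A short edge of `K₆`: a 2-element set of vertices at cyclic distance exactly 2. -/
def ShortEdge (e : Finset (ZMod 6)) : Prop :=
  e.card = 2 ∧ ∀ a ∈ e, ∀ b ∈ e, a ≠ b → cycLen a b = 2

/-- A long edge of `K₆`: a 2-element set of vertices at cyclic distance exactly 3. -/
def LongEdge (e : Finset (ZMod 6)) : Prop :=
  e.card = 2 ∧ ∀ a ∈ e, ∀ b ∈ e, a ≠ b → cycLen a b = 3

/-- `x` lies in the open cyclic arc from `a` to `b` (in the cyclic order of labels). -/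
def InArc (a b x : ZMod 6) : Prop := 0 < (x - a).val ∧ (x - a).val < (b - a).val

/-- Two chords `{a,b}` and `{c,d}` cross iff their endpoint sets are disjoint and
exactly one of `c`, `d` lies in the open cyclic arc from `a` to `b`. -/
def Crosses (e f : Finset (ZMod 6)) : Prop :=
  Disjoint e f ∧ ∃ a b c d : ZMod 6, a ≠ b ∧ c ≠ d ∧ e = {a, b} ∧ f = {c, d} ∧
    Xor' (InArc a b c) (InArc a b d)


instance (a b x : ZMod 6) : Decidable (InArc a b x) := by unfold InArc; infer_instance
instance (e f : Finset (ZMod 6)) : Decidable (Crosses e f) := by unfold Crosses Xor'; infer_instance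
instance (e : Finset (ZMod 6)) : Decidable (ShortEdge e) := by unfold ShortEdge; infer_instance
instance (e : Finset (ZMod 6)) : Decidable (LongEdge e) := by unfold LongEdge; infer_instance

def SList : List (Finset (ZMod 6)) := [{0,2},{1,3},{2,4},{3,5},{4,0},{5,1}]
def LList : List (Finset (ZMod 6)) := [{0,3},{1,4},{2,5}]

lemma short_mem : ∀ e : Finset (ZMod 6), ShortEdge e → e ∈ SList := by decide

lemma long_all : ∀ L ∈ LList, LongEdge L := by decide

set_option maxHeartbeats 4000000 in
set_option maxRecDepth 10000 in
lemma key : ∀ s1 ∈ SList, ∀ s2 ∈ SList, ∀ s3 ∈ SList, ∀ s4 ∈ SList,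
    Crosses s1 s2 → Crosses s2 s3 → Crosses s3 s4 → s1 ≠ s3 → s2 ≠ s4 →
    ∃ L ∈ LList, Crosses s1 L ∧ Crosses s4 L := by decide

/-- If `s₁ s₂ s₃ s₄` are short edges of `K₆` with `s₁` crossing `s₂`, `s₂` crossing `s₃`,
`s₃` crossing `s₄`, `s₁ ≠ s₃` and `s₂ ≠ s₄`, then `s₁` and `s₄` cross the same long edge. -/
theorem stmt_7 (s1 s2 s3 s4 : Finset (ZMod 6))
    (h1 : ShortEdge s1) (h2 : ShortEdge s2) (h3 : ShortEdge s3) (h4 : ShortEdge s4)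
    (h12 : Crosses s1 s2) (h23 : Crosses s2 s3) (h34 : Crosses s3 s4)
    (h13 : s1 ≠ s3) (h24 : s2 ≠ s4) :
    ∃ L : Finset (ZMod 6), LongEdge L ∧ Crosses s1 L ∧ Crosses s4 L := by
  obtain ⟨L, hL, hc1, hc4⟩ := key s1 (short_mem s1 h1) s2 (short_mem s2 h2)
    s3 (short_mem s3 h3) s4 (short_mem s4 h4) h12 h23 h34 h13 h24
  exact ⟨L, long_all L hL, hc1, hc4⟩
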